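/- ∫ over the region {(z_2, z_3, z_4) ∈ ℝ³ : 0 < z_2 < z_3 < z_4 < 1} of 1/( z_3·(1 − z_3)·(z_4 − z_2) ) dz_2 dz_3 dz_4 = π²/3. -/

import Mathlib

open MeasureTheory

open Real Set in
private lemma aux_inner {z3 z4 : ℝ} (h3 : 0 < z3) (h34 : z3 < z4) (h4 : z4 < 1) :
    ∫ z2 in (0:ℝ)..z3, 1 / (z3 * (1 - z3) * (z4 - z2)) =
      (Real.log z4 - Real.log (z4 - z3)) / (z3 * (1 - z3)) := by
  have h1 : 0 < 1 - z3 := by linarith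
  have hc : 0 < z3 * (1 - z3) := mul_pos h3 h1
  have key : ∀ z ∈ uIcc (0:ℝ) z3,
      HasDerivAt (fun z => -Real.log (z4 - z) / (z3 * (1 - z3)))
        (1 / (z3 * (1 - z3) * (z4 - z))) z := by
    intro z hz
    rw [uIcc_of_le h3.le] at hz
    have hz4 : 0 < z4 - z := by cases' hz with hz1 hz2; linarith
    have hd : HasDerivAt (fun z : ℝ => z4 - z) (-1) z := (hasDerivAt_id z).const_sub z4
    have := ((Real.hasDerivAt_log hz4.ne').comp z hd).neg.div_const (z3 * (1 - z3))
    refine this.congr_deriv ?_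
    field_simp
  rw [intervalIntegral.integral_eq_sub_of_hasDerivAt key ?_]
  · ring
  · apply ContinuousOn.intervalIntegrable
    apply ContinuousOn.div continuousOn_const
    · fun_prop
    · intro z hz
      rw [uIcc_of_le h3.le] at hz
      have : 0 < z4 - z := by cases' hz with hz1 hz2; linarith
      positivity

open Real Set in
private lemma aux_mid {z3 : ℝ} (h0 : 0 < z3) (h1 : z3 < 1) :
    IntegrableOn (fun z4 => (Real.log z4 - Real.log (z4 - z3)) / (z3 * (1 - z3)))
        (Ioc z3 1) volume ∧
    ∫ z4 in z3..1, (Real.log z4 - Real.log (z4 - z3)) / (z3 * (1 - z3)) =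
      (-((1 - z3) * Real.log (1 - z3)) - z3 * Real.log z3) / (z3 * (1 - z3)) := by
  have h1' : 0 < 1 - z3 := by linarith
  have hc : 0 < z3 * (1 - z3) := mul_pos h0 h1'
  set G : ℝ → ℝ := fun z => (z * Real.log z - (z - z3) * Real.log (z - z3) - z3) / (z3 * (1 - z3))
    with hG
  have hGcont : Continuous G := by
    apply Continuous.div_const
    apply Continuous.sub _ continuous_const
    exact Real.continuous_mul_log.sub
      (Real.continuous_mul_log.comp (continuous_id.sub continuous_const))
  have hGderiv : ∀ z ∈ Ioo z3 1,
      HasDerivAt G ((Real.log z - Real.log (z - z3)) / (z3 * (1 - z3))) z := by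
    intro z hz
    have hz0 : 0 < z := h0.trans hz.1
    have hzz : 0 < z - z3 := by linarith [hz.1]
    have d1 : HasDerivAt (fun z : ℝ => z * Real.log z) (Real.log z + 1) z :=
      Real.hasDerivAt_mul_log hz0.ne'
    have d2 : HasDerivAt (fun z : ℝ => (z - z3) * Real.log (z - z3))
        ((Real.log (z - z3) + 1) * 1) z := by
      exact (Real.hasDerivAt_mul_log hzz.ne').comp z ((hasDerivAt_id z).sub_const z3)
    have := ((d1.sub d2).sub_const z3).div_const (z3 * (1 - z3))
    refine this.congr_deriv ?_
    ring
  have hnn : ∀ z ∈ Ioo z3 1, 0 ≤ (Real.log z - Real.log (z - z3)) / (z3 * (1 - z3)) := by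
    intro z hz
    have hzz : 0 < z - z3 := by linarith [hz.1]
    have : Real.log (z - z3) ≤ Real.log z := Real.log_le_log hzz (by linarith)
    exact div_nonneg (by linarith) hc.le
  have hint : IntegrableOn (fun z4 => (Real.log z4 - Real.log (z4 - z3)) / (z3 * (1 - z3)))
      (Ioc z3 1) volume :=
    intervalIntegral.integrableOn_deriv_of_nonneg hGcont.continuousOn hGderiv hnn
  refine ⟨hint, ?_⟩
  rw [intervalIntegral.integral_eq_sub_of_hasDerivAt_of_le h1.le hGcont.continuousOn hGderiv
    ((intervalIntegrable_iff_integrableOn_Ioc_of_le h1.le).mpr hint)]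
  simp only [hG]
  rw [Real.log_one]
  have : z3 - z3 = 0 := by ring
  rw [this]
  simp [Real.log_zero]
  ring

open Real Set in
private lemma aux_hasSum {x : ℝ} (h0 : 0 < x) (h1 : x < 1) :
    HasSum (fun n : ℕ => x ^ n / ((n : ℝ) + 1)) (-Real.log (1 - x) / x) := by
  have habs : |x| < 1 := by rw [abs_of_pos h0]; exact h1
  have h := (Real.hasSum_pow_div_log_of_abs_lt_one habs).div_const x
  refine h.congr_fun fun n => ?_
  field_simp
  ring

open Real Set in
private lemma aux_sum_inv_sq :
    HasSum (fun n : ℕ => (1 : ℝ) / ((n : ℝ) + 1) ^ 2) (Real.pi ^ 2 / 6) := by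
  have h := hasSum_zeta_two
  rw [← hasSum_nat_add_iff' 1] at h
  have h2 := h.congr_fun (g := fun n : ℕ => (1 : ℝ) / ((n : ℝ) + 1) ^ 2)
    fun n => by push_cast; ring
  simpa using h2

open Real Set in
private lemma aux_J1 :
    ∫⁻ x in Ioo (0:ℝ) 1, ENNReal.ofReal (-Real.log (1 - x) / x) =
      ENNReal.ofReal (Real.pi ^ 2 / 6) := by
  have step1 : ∫⁻ x in Ioo (0:ℝ) 1, ENNReal.ofReal (-Real.log (1 - x) / x) =
      ∫⁻ x in Ioo (0:ℝ) 1, ∑' n : ℕ, ENNReal.ofReal (x ^ n / ((n : ℝ) + 1)) := by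
    apply setLIntegral_congr_fun measurableSet_Ioo
    intro x hx
    dsimp only
    have hs := aux_hasSum hx.1 hx.2
    rw [← hs.tsum_eq, ENNReal.ofReal_tsum_of_nonneg
      (fun n => div_nonneg (pow_nonneg hx.1.le n) (by positivity)) hs.summable]
  rw [step1, lintegral_tsum (fun n => by fun_prop)]
  have step2 : ∀ n : ℕ, ∫⁻ x in Ioo (0:ℝ) 1, ENNReal.ofReal (x ^ n / ((n : ℝ) + 1)) =
      ENNReal.ofReal ((1 : ℝ) / ((n : ℝ) + 1) ^ 2) := by
    intro n
    have hint : IntegrableOn (fun x : ℝ => x ^ n / ((n : ℝ) + 1)) (Ioo 0 1) volume := by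
      apply Integrable.mono_measure ?_ (Measure.restrict_mono Ioo_subset_Icc_self le_rfl)
      apply ContinuousOn.integrableOn_Icc
      fun_prop
    rw [← ofReal_integral_eq_lintegral_ofReal hint]
    · rw [← integral_Ioc_eq_integral_Ioo, ← intervalIntegral.integral_of_le zero_le_one]
      rw [intervalIntegral.integral_div, integral_pow]
      norm_num
      rw [ENNReal.ofReal_eq_ofReal_iff (by positivity) (by positivity)]
      field_simp
    · filter_upwards [ae_restrict_mem measurableSet_Ioo] with x hx
      have := hx.1
      positivity
  simp_rw [step2]
  rw [← ENNReal.ofReal_tsum_of_nonneg (fun n => by positivity) aux_sum_inv_sq.summable,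
    aux_sum_inv_sq.tsum_eq]

open Real Set in
private lemma aux_J2 :
    ∫⁻ x in Ioo (0:ℝ) 1, ENNReal.ofReal (-Real.log x / (1 - x)) =
      ∫⁻ x in Ioo (0:ℝ) 1, ENNReal.ofReal (-Real.log (1 - x) / x) := by
  have hm : Measurable fun x : ℝ =>
      (Ioo (0:ℝ) 1).indicator (fun x => ENNReal.ofReal (-Real.log x / (1 - x))) x := by
    apply Measurable.indicator ?_ measurableSet_Ioo
    exact ENNReal.measurable_ofReal.comp
      ((Real.measurable_log.neg).div (measurable_const.sub measurable_id))
  have hpres : MeasurePreserving (fun x : ℝ => 1 - x) volume volume :=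
    Measure.measurePreserving_sub_left volume 1
  have := hpres.lintegral_comp hm
  rw [← lintegral_indicator measurableSet_Ioo, ← lintegral_indicator measurableSet_Ioo, ← this]
  congr 1
  funext x
  by_cases hx : x ∈ Ioo (0:ℝ) 1
  · have hx' : 1 - x ∈ Ioo (0:ℝ) 1 := by constructor <;> [linarith [hx.2]; linarith [hx.1]]
    simp only [indicator_of_mem hx, indicator_of_mem hx']
    norm_num
  · have hx' : 1 - x ∉ Ioo (0:ℝ) 1 := by
      simp only [mem_Ioo, not_and_or] at hx ⊢
      rcases hx with h | h
      · right; linarith [not_lt.mp h]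
      · left; linarith [not_lt.mp h]
    simp [indicator_of_notMem hx, indicator_of_notMem hx']

open Real Set in
private lemma aux_C :
    ∫⁻ z3 in Ioo (0:ℝ) 1, ENNReal.ofReal
      ((-((1 - z3) * Real.log (1 - z3)) - z3 * Real.log z3) / (z3 * (1 - z3)))
      = ENNReal.ofReal (Real.pi ^ 2 / 3) := by
  have split : ∫⁻ z3 in Ioo (0:ℝ) 1, ENNReal.ofReal
      ((-((1 - z3) * Real.log (1 - z3)) - z3 * Real.log z3) / (z3 * (1 - z3)))
      = ∫⁻ x in Ioo (0:ℝ) 1,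
        (ENNReal.ofReal (-Real.log (1 - x) / x) + ENNReal.ofReal (-Real.log x / (1 - x))) := by
    apply setLIntegral_congr_fun measurableSet_Ioo
    intro x hx
    dsimp only
    have hx0 : 0 < x := hx.1
    have hx1 : 0 < 1 - x := by linarith [hx.2]
    have e1 : (-((1 - x) * Real.log (1 - x)) - x * Real.log x) / (x * (1 - x))
        = -Real.log (1 - x) / x + -Real.log x / (1 - x) := by
      field_simp
      ring
    rw [e1, ENNReal.ofReal_add]
    · exact div_nonneg (neg_nonneg.mpr (Real.log_nonpos hx1.le (by linarith))) hx0.le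
    · exact div_nonneg (neg_nonneg.mpr (Real.log_nonpos hx0.le hx.2.le)) hx1.le
  rw [split, lintegral_add_left (by
    exact ENNReal.measurable_ofReal.comp
      ((Real.measurable_log.comp (measurable_const.sub measurable_id)).neg.div measurable_id)),
    aux_J1, aux_J2, aux_J1, ← ENNReal.ofReal_add (by positivity) (by positivity)]
  congr 1
  ring

open Real Set in
open scoped ENNReal in
/-- The disc volume `V_disc(6)` equals `π²/3`. -/
theorem stmt_15 :
    ∫ z in {z : ℝ × ℝ × ℝ |
        0 < z.1 ∧ z.1 < z.2.1 ∧ z.2.1 < z.2.2 ∧ z.2.2 < 1},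
      1 / (z.2.1 * (1 - z.2.1) * (z.2.2 - z.1)) = Real.pi ^ 2 / 3 := by
  set f : ℝ × ℝ × ℝ → ℝ := fun z => 1 / (z.2.1 * (1 - z.2.1) * (z.2.2 - z.1)) with hfdef
  set S : Set (ℝ × ℝ × ℝ) :=
    {z : ℝ × ℝ × ℝ | 0 < z.1 ∧ z.1 < z.2.1 ∧ z.2.1 < z.2.2 ∧ z.2.2 < 1} with hSdef
  have hS : MeasurableSet S := by
    apply MeasurableSet.inter
    · exact measurableSet_lt measurable_const measurable_fst
    apply MeasurableSet.inter
    · exact measurableSet_lt measurable_fst (measurable_fst.comp measurable_snd)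
    apply MeasurableSet.inter
    · exact measurableSet_lt (measurable_fst.comp measurable_snd)
        (measurable_snd.comp measurable_snd)
    · exact measurableSet_lt (measurable_snd.comp measurable_snd) measurable_const
  have hfm : Measurable f := by
    apply Measurable.div measurable_const
    exact (((measurable_fst.comp measurable_snd).mul
      (measurable_const.sub (measurable_fst.comp measurable_snd)))).mul
      ((measurable_snd.comp measurable_snd).sub measurable_fst)
  have hnn : 0 ≤ᵐ[volume.restrict S] f := by
    refine (ae_restrict_iff' hS).mpr (ae_of_all _ fun z hz => ?_)
    obtain ⟨h1, h2, h3, h4⟩ := hz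
    have : 0 < z.2.1 := h1.trans h2
    have : 0 < 1 - z.2.1 := by linarith
    have : 0 < z.2.2 - z.1 := by linarith
    positivity
  rw [integral_eq_lintegral_of_nonneg_ae hnn (hfm.aestronglyMeasurable.restrict)]
  have hK : ∫⁻ z in S, ENNReal.ofReal (f z) = ENNReal.ofReal (Real.pi ^ 2 / 3) := by
    set F : ℝ × ℝ × ℝ → ℝ≥0∞ := S.indicator (fun z => ENNReal.ofReal (f z)) with hFdef
    have hFm : Measurable F := (ENNReal.measurable_ofReal.comp hfm).indicator hS
    rw [← lintegral_indicator hS, ← hFdef]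
    rw [Measure.volume_eq_prod, lintegral_prod_symm _ hFm.aemeasurable]
    have hGm : Measurable fun y : ℝ × ℝ => ∫⁻ x, F (x, y) := hFm.lintegral_prod_left'
    rw [Measure.volume_eq_prod, lintegral_prod _ hGm.aemeasurable]
    have claimA : ∀ z3 z4 : ℝ, ∫⁻ z2, F (z2, (z3, z4)) =
        if 0 < z3 ∧ z3 < z4 ∧ z4 < 1 then
          ENNReal.ofReal ((Real.log z4 - Real.log (z4 - z3)) / (z3 * (1 - z3))) else 0 := by
      intro z3 z4
      by_cases h : 0 < z3 ∧ z3 < z4 ∧ z4 < 1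
      · obtain ⟨h3, h34, h4⟩ := h
        have h31 : z3 < 1 := h34.trans h4
        have hc : 0 < z3 * (1 - z3) := mul_pos h3 (by linarith)
        have heq : (fun z2 => F (z2, (z3, z4))) = (Ioo 0 z3).indicator
            (fun z2 => ENNReal.ofReal (1 / (z3 * (1 - z3) * (z4 - z2)))) := by
          funext z2
          by_cases hz : z2 ∈ Ioo 0 z3
          · rw [indicator_of_mem hz, hFdef,
              indicator_of_mem (show (z2, (z3, z4)) ∈ S from ⟨hz.1, hz.2, h34, h4⟩)]
          · rw [indicator_of_notMem hz, hFdef, indicator_of_notMem]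
            rintro ⟨a, b, -, -⟩
            exact hz ⟨a, b⟩
        rw [heq, lintegral_indicator measurableSet_Ioo]
        have hIcont : IntegrableOn (fun z2 : ℝ => 1 / (z3 * (1 - z3) * (z4 - z2)))
            (Ioo 0 z3) volume := by
          apply IntegrableOn.mono_set ?_ Ioo_subset_Icc_self
          apply ContinuousOn.integrableOn_Icc
          apply ContinuousOn.div continuousOn_const (by fun_prop)
          intro z hz
          have : 0 < z4 - z := by linarith [hz.2]
          positivity
        have hnn2 : 0 ≤ᵐ[volume.restrict (Ioo 0 z3)]
            fun z2 : ℝ => 1 / (z3 * (1 - z3) * (z4 - z2)) := by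
          refine (ae_restrict_iff' measurableSet_Ioo).mpr (ae_of_all _ fun z hz => ?_)
          have : 0 < z4 - z := by linarith [hz.2]
          positivity
        rw [← ofReal_integral_eq_lintegral_ofReal hIcont hnn2, if_pos ⟨h3, h34, h4⟩]
        congr 1
        rw [← integral_Ioc_eq_integral_Ioo, ← intervalIntegral.integral_of_le h3.le]
        exact aux_inner h3 h34 h4
      · have heq : (fun z2 => F (z2, (z3, z4))) = fun _ => 0 := by
          funext z2
          rw [hFdef, indicator_of_notMem]
          rintro ⟨a, b, c, d⟩
          exact h ⟨a.trans b, c, d⟩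
        rw [heq, if_neg h]
        simp
    simp_rw [claimA]
    have claimB : ∀ z3 : ℝ, (∫⁻ z4, if 0 < z3 ∧ z3 < z4 ∧ z4 < 1 then
          ENNReal.ofReal ((Real.log z4 - Real.log (z4 - z3)) / (z3 * (1 - z3))) else 0) =
        if 0 < z3 ∧ z3 < 1 then ENNReal.ofReal
          ((-((1 - z3) * Real.log (1 - z3)) - z3 * Real.log z3) / (z3 * (1 - z3))) else 0 := by
      intro z3
      by_cases h : 0 < z3 ∧ z3 < 1
      · obtain ⟨h0, h1⟩ := h
        have hc : 0 < z3 * (1 - z3) := mul_pos h0 (by linarith)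
        have heq : (fun z4 => if 0 < z3 ∧ z3 < z4 ∧ z4 < 1 then
            ENNReal.ofReal ((Real.log z4 - Real.log (z4 - z3)) / (z3 * (1 - z3))) else 0) =
            (Ioo z3 1).indicator (fun z4 =>
              ENNReal.ofReal ((Real.log z4 - Real.log (z4 - z3)) / (z3 * (1 - z3)))) := by
          funext z4
          by_cases hz : z4 ∈ Ioo z3 1
          · rw [indicator_of_mem hz, if_pos ⟨h0, hz.1, hz.2⟩]
          · rw [indicator_of_notMem hz, if_neg]
            rintro ⟨-, b, c⟩
            exact hz ⟨b, c⟩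
        rw [heq, lintegral_indicator measurableSet_Ioo]
        have hint : IntegrableOn
            (fun z4 => (Real.log z4 - Real.log (z4 - z3)) / (z3 * (1 - z3)))
            (Ioo z3 1) volume := (aux_mid h0 h1).1.mono_set Ioo_subset_Ioc_self
        have hnn2 : 0 ≤ᵐ[volume.restrict (Ioo z3 1)]
            fun z4 => (Real.log z4 - Real.log (z4 - z3)) / (z3 * (1 - z3)) := by
          refine (ae_restrict_iff' measurableSet_Ioo).mpr (ae_of_all _ fun z hz => ?_)
          have hzz : 0 < z - z3 := by linarith [hz.1]
          have : Real.log (z - z3) ≤ Real.log z := Real.log_le_log hzz (by linarith)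
          exact div_nonneg (by linarith) hc.le
        rw [← ofReal_integral_eq_lintegral_ofReal hint hnn2, if_pos ⟨h0, h1⟩]
        congr 1
        rw [← integral_Ioc_eq_integral_Ioo, ← intervalIntegral.integral_of_le h1.le]
        exact (aux_mid h0 h1).2
      · have heq : (fun z4 => if 0 < z3 ∧ z3 < z4 ∧ z4 < 1 then
            ENNReal.ofReal ((Real.log z4 - Real.log (z4 - z3)) / (z3 * (1 - z3))) else 0) =
            fun _ => 0 := by
          funext z4
          rw [if_neg]
          rintro ⟨a, b, c⟩
          exact h ⟨a, b.trans c⟩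
        rw [heq, if_neg h]
        simp
    simp_rw [claimB]
    have heq : (fun z3 : ℝ => if 0 < z3 ∧ z3 < 1 then ENNReal.ofReal
        ((-((1 - z3) * Real.log (1 - z3)) - z3 * Real.log z3) / (z3 * (1 - z3))) else 0) =
        (Ioo (0:ℝ) 1).indicator (fun z3 => ENNReal.ofReal
          ((-((1 - z3) * Real.log (1 - z3)) - z3 * Real.log z3) / (z3 * (1 - z3)))) := by
      funext z3
      by_cases hz : z3 ∈ Ioo (0:ℝ) 1
      · rw [indicator_of_mem hz, if_pos ⟨hz.1, hz.2⟩]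
      · rw [indicator_of_notMem hz, if_neg]
        rintro ⟨a, b⟩
        exact hz ⟨a, b⟩
    rw [heq, lintegral_indicator measurableSet_Ioo]
    exact aux_C
  rw [hK, ENNReal.toReal_ofReal (by positivity)]
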